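/- For ω ∈ {0,1}^n with ω_1 = 0 and ω_n = 1, with S_k = Σ_{i=1}^k (1−2ω_i) and U the number of 1's in ω, we have Depth(Y(ω)) = U + max_{0 ≤ k ≤ n} S_k − 1. -/
import Mathlib


open Finset

/-- The k-th bit of a string of length `n`, padded with `false` out of range. -/
def bit (n : ℕ) (ω : Fin n → Bool) (k : ℕ) : Bool :=
  if h : k < n then ω ⟨k, h⟩ else false

/-- One step of the evolution: every occurrence of "01" is replaced by "10"
(simultaneously).  `E(ω)_i = 1` iff `(ω_i = 1 ∧ ¬(i ≥ 2 ∧ ω_{i-1} = 0)) ∨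
(ω_i = 0 ∧ i < n ∧ ω_{i+1} = 1)` (1-indexed; here 0-indexed). -/
def evolve (n : ℕ) (ω : Fin n → Bool) : Fin n → Bool :=
  fun i =>
    (bit n ω i.val && !(decide (0 < i.val) && !bit n ω (i.val - 1)))
      || (!bit n ω i.val && bit n ω (i.val + 1))

/-- A string is stable iff it contains no occurrence of "01". -/
def IsStable (n : ℕ) (ω : Fin n → Bool) : Prop :=
  ∀ k : ℕ, ¬(bit n ω k = false ∧ bit n ω (k + 1) = true)

/-- The stabilization time: the least number of applications of `evolve`
after which the string is stable. -/
noncomputable def stabTime (n : ℕ) (ω : Fin n → Bool) : ℕ :=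
  sInf {m : ℕ | IsStable n ((evolve n)^[m] ω)}

/-- A Young diagram: a finite down-closed set of cells in ℕ≥1 × ℕ≥1. -/
def IsYoungDiagram (Y : Finset (ℕ × ℕ)) : Prop :=
  (∀ c ∈ Y, 1 ≤ c.1 ∧ 1 ≤ c.2) ∧
    ∀ c ∈ Y, ∀ i j : ℕ, 1 ≤ i → 1 ≤ j → i ≤ c.1 → j ≤ c.2 → (i, j) ∈ Y

/-- The corner-cutting map: remove all exposed corners, i.e. cells `(i,j)` with
`(i+1,j) ∉ Y` and `(i,j+1) ∉ Y`. -/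
def cutCorners (Y : Finset (ℕ × ℕ)) : Finset (ℕ × ℕ) :=
  Y.filter fun c => (c.1 + 1, c.2) ∈ Y ∨ (c.1, c.2 + 1) ∈ Y

/-- Depth of a Young diagram: `max {i + j - 1 : (i,j) ∈ Y}`, with `depth ∅ = 0`. -/
def depth (Y : Finset (ℕ × ℕ)) : ℕ := Y.sup fun c => c.1 + c.2 - 1

/-- Number of zeros among the first `m` bits of `ω`. -/
def zerosBefore (n : ℕ) (ω : Fin n → Bool) (m : ℕ) : ℕ :=
  (Finset.univ.filter fun l : Fin n => l.val < m ∧ ω l = false).card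

/-- Number of ones among the bits of `ω` from position `m` (0-indexed) on. -/
def onesFrom (n : ℕ) (ω : Fin n → Bool) (m : ℕ) : ℕ :=
  (Finset.univ.filter fun l : Fin n => m ≤ l.val ∧ ω l = true).card

open Classical in
/-- The Young diagram associated to a binary string: the cells below the
monotone lattice path reading ω left to right (0 = right step, 1 = down step).
`(i,j) ∈ Y(ω)` iff there is a cut point `m` with at least `i` zeros among the
first `m` bits and at least `j` ones among the remaining bits. -/
noncomputable def diag (n : ℕ) (ω : Fin n → Bool) : Finset (ℕ × ℕ) :=
  (Finset.Icc 1 n ×ˢ Finset.Icc 1 n).filter fun c =>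
    1 ≤ c.1 ∧ 1 ≤ c.2 ∧ ∃ m ≤ n, c.1 ≤ zerosBefore n ω m ∧ c.2 ≤ onesFrom n ω m

/-- The ±1 walk associated with a string: `S_k = Σ_{i=1}^k (1 - 2 ω_i)`. -/
def walk (n : ℕ) (ω : Fin n → Bool) (k : ℕ) : ℤ :=
  ∑ i ∈ Finset.range k, (1 - 2 * (if bit n ω i then 1 else 0) : ℤ)

lemma sum_eq (n : ℕ) (ω : Fin n → Bool) (k : ℕ) :
    (zerosBefore n ω k : ℤ) + onesFrom n ω k =
      ∑ l : Fin n, ((if l.val < k ∧ ω l = false then (1:ℤ) else 0)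
        + (if k ≤ l.val ∧ ω l = true then 1 else 0)) := by
  rw [Finset.sum_add_distrib]
  congr 1
  · rw [zerosBefore, Finset.card_filter]; push_cast; rfl
  · rw [onesFrom, Finset.card_filter]; push_cast; rfl

lemma key (n : ℕ) (ω : Fin n → Bool) : ∀ m, m ≤ n →
    (zerosBefore n ω m : ℤ) + onesFrom n ω m
      = ((univ.filter fun l : Fin n => ω l = true).card : ℤ) + walk n ω m := by
  intro m
  induction m with
  | zero =>
    intro _
    simp only [zerosBefore, onesFrom, walk, Finset.range_zero, Finset.sum_empty, add_zero]
    simp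
  | succ m ih =>
    intro hm
    have hm' : m < n := hm
    have ihm := ih (le_of_lt hm')
    have hw : walk n ω (m+1) = walk n ω m + (1 - 2 * (if ω ⟨m, hm'⟩ then 1 else 0)) := by
      rw [walk, Finset.sum_range_succ, bit, dif_pos hm']; rfl
    have hstep : ((zerosBefore n ω (m+1) : ℤ) + onesFrom n ω (m+1))
        - ((zerosBefore n ω m : ℤ) + onesFrom n ω m)
        = 1 - 2 * (if ω ⟨m, hm'⟩ then 1 else 0) := by
      rw [sum_eq, sum_eq, ← Finset.sum_sub_distrib]
      rw [Finset.sum_eq_single (⟨m, hm'⟩ : Fin n)]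
      · cases h : ω ⟨m, hm'⟩ <;> simp [h]
      · intro l _ hl
        have hlm : l.val ≠ m := by
          intro h; exact hl (Fin.ext h)
        cases h : ω l <;> simp [h] <;> split_ifs <;> omega
      · intro h; exact absurd (Finset.mem_univ _) h
    linarith [hstep, ihm, hw]

/-- For a string starting with 0 and ending with 1,
`Depth(Y(ω)) = U + max_{0 ≤ k ≤ n} S_k - 1` where `U` is the number of 1's. -/
theorem stmt7 (n : ℕ) (hn : 0 < n) (ω : Fin n → Bool)
    (h0 : ω ⟨0, hn⟩ = false) (h1 : ω ⟨n - 1, Nat.sub_lt hn one_pos⟩ = true) :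
    (depth (diag n ω) : ℤ) =
      ((Finset.univ.filter fun l : Fin n => ω l = true).card : ℤ)
        + (Finset.Icc 0 n).sup' (Finset.nonempty_Icc.mpr (Nat.zero_le n)) (walk n ω)
        - 1 := by
  classical
  set U : ℤ := ((Finset.univ.filter fun l : Fin n => ω l = true).card : ℤ) with hU
  set M : ℤ := (Finset.Icc 0 n).sup' (Finset.nonempty_Icc.mpr (Nat.zero_le n)) (walk n ω)
    with hMdef
  have hw1 : walk n ω 1 = 1 := by
    rw [walk, Finset.sum_range_one, bit, dif_pos hn, h0]; norm_num
  have hM1 : (1:ℤ) ≤ M := by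
    rw [hMdef, ← hw1]
    exact Finset.le_sup' (walk n ω) (Finset.mem_Icc.mpr ⟨Nat.zero_le _, hn⟩)
  obtain ⟨k, hkmem, hkeq⟩ :=
    Finset.exists_mem_eq_sup' (Finset.nonempty_Icc.mpr (Nat.zero_le n)) (walk n ω)
  have hkn : k ≤ n := (Finset.mem_Icc.mp hkmem).2
  have hMk : M = walk n ω k := hkeq
  have hwn : walk n ω n = walk n ω (n-1) - 1 := by
    have he : n - 1 + 1 = n := Nat.succ_pred_eq_of_pos hn
    have h' : walk n ω n = walk n ω (n-1+1) := by rw [he]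
    rw [h', walk, Finset.sum_range_succ, bit, dif_pos (Nat.sub_lt hn one_pos), h1, ← walk]
    simp
    ring
  have hkne : k ≠ n := by
    intro h
    have h2 : walk n ω (n-1) ≤ M :=
      Finset.le_sup' (walk n ω) (Finset.mem_Icc.mpr ⟨Nat.zero_le _, Nat.sub_le n 1⟩)
    rw [hMk, h, hwn] at h2
    linarith
  have hk1 : 1 ≤ k := by
    by_contra h
    have hk0 : k = 0 := by omega
    have : M = 0 := by rw [hMk, hk0, walk]; simp
    linarith
  have hkn1 : k ≤ n - 1 := by omega
  have ha1 : 1 ≤ zerosBefore n ω k := Finset.card_pos.mpr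
    ⟨⟨0, hn⟩, Finset.mem_filter.mpr ⟨Finset.mem_univ _, hk1, h0⟩⟩
  have ha2 : zerosBefore n ω k ≤ n :=
    le_trans (Finset.card_filter_le _ _) (by simp)
  have hb1 : 1 ≤ onesFrom n ω k := Finset.card_pos.mpr
    ⟨⟨n - 1, Nat.sub_lt hn one_pos⟩, Finset.mem_filter.mpr ⟨Finset.mem_univ _, hkn1, h1⟩⟩
  have hb2 : onesFrom n ω k ≤ n :=
    le_trans (Finset.card_filter_le _ _) (by simp)
  have hcell : (zerosBefore n ω k, onesFrom n ω k) ∈ diag n ω := by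
    simp only [_root_.diag, Finset.mem_filter, Finset.mem_product, Finset.mem_Icc]
    exact ⟨⟨⟨ha1, ha2⟩, hb1, hb2⟩, ha1, hb1, k, hkn, le_refl _, le_refl _⟩
  have hkey := key n ω k hkn
  have lower : U + M - 1 ≤ (depth (diag n ω) : ℤ) := by
    have hle : zerosBefore n ω k + onesFrom n ω k - 1 ≤ depth (diag n ω) :=
      Finset.le_sup (f := fun c : ℕ × ℕ => c.1 + c.2 - 1) hcell
    have hle' := (Nat.cast_le (α := ℤ)).mpr hle
    have hcast : ((zerosBefore n ω k + onesFrom n ω k - 1 : ℕ) : ℤ)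
        = (zerosBefore n ω k : ℤ) + onesFrom n ω k - 1 := by omega
    rw [hMk]
    rw [hcast] at hle'
    linarith
  have upper : (depth (diag n ω) : ℤ) ≤ U + M - 1 := by
    obtain ⟨c, hc, hsup⟩ := Finset.exists_mem_eq_sup (diag n ω) ⟨_, hcell⟩
      (fun c : ℕ × ℕ => c.1 + c.2 - 1)
    rw [depth, hsup]
    simp only [_root_.diag, Finset.mem_filter, Finset.mem_product, Finset.mem_Icc] at hc
    obtain ⟨-, hc1, hc2, m, hmn, hma, hmb⟩ := hc
    have hkm := key n ω m hmn
    have hwm : walk n ω m ≤ M :=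
      Finset.le_sup' (walk n ω) (Finset.mem_Icc.mpr ⟨Nat.zero_le _, hmn⟩)
    have hma' : (c.1 : ℤ) ≤ zerosBefore n ω m := Nat.cast_le.mpr hma
    have hmb' : (c.2 : ℤ) ≤ onesFrom n ω m := Nat.cast_le.mpr hmb
    have hcast : ((c.1 + c.2 - 1 : ℕ) : ℤ) = (c.1:ℤ) + c.2 - 1 := by omega
    rw [hcast]
    linarith
  linarith
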